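/- Let y, x_1, ..., x_p be square-integrable mean-zero random variables satisfying y = Σ_j β_j x_j + ε with ε uncorrelated with all x_j, and let J ⊆ {1,...,p}. Denote by y_J(x) the L² projection of Σ_j β_j x_j onto span{x_j : j ∈ J} and μ_{J,i} = E[(y(x) − y_J(x)) x_{i;J}^⊥]/√E[(x_{i;J}^⊥)²]. Then E[(y(x) − y_J(x))²] ≤ (max_{1≤j≤p} |μ_{J,j}|) · Σ_{j=1}^p |β_j| · max_j √E[(x_{j;J}^⊥)²], where μ_{J,j} = 0 for j ∈ J. In particular, if E(x_j²) = 1 for all j, then E[(y(x) − y_J(x))²] ≤ (max_j |μ_{J,j}|) Σ_j |β_j|. -/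

import Mathlib

open MeasureTheory
open scoped ENNReal

section Aux

variable {Ω : Type*} [MeasurableSpace Ω] {μ : Measure Ω}

lemma myIntMul {f g : Ω → ℝ} (hf : MemLp f 2 μ) (hg : MemLp g 2 μ) :
    Integrable (fun ω => f ω * g ω) μ := by
  have h : (1 : ℝ≥0∞)/1 = 1/2 + 1/2 := by
    rw [ENNReal.div_add_div_same]; norm_num
    rw [ENNReal.div_self (two_ne_zero) (ENNReal.ofNat_ne_top)]
  have := (hg.smul hf : MemLp (f • g) 1 μ)
  rw [memLp_one_iff_integrable] at this
  exact this

lemma mySpanL2 {ι : Type*} {x : ι → Ω → ℝ} {S : Set ι} (hx : ∀ j, MemLp (x j) 2 μ)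
    {f : Ω → ℝ} (hf : f ∈ Submodule.span ℝ (x '' S)) : MemLp f 2 μ := by
  induction hf using Submodule.span_induction with
  | mem g hg => obtain ⟨j, _, rfl⟩ := hg; exact hx j
  | zero => exact MemLp.zero
  | add f g _ _ hf hg => exact hf.add hg
  | smul c f _ hf => exact hf.const_smul c

lemma myOrthSpan {ι : Type*} {x : ι → Ω → ℝ} {S : Set ι} (hx : ∀ j, MemLp (x j) 2 μ)
    {g : Ω → ℝ} (hg : MemLp g 2 μ) (h : ∀ j ∈ S, ∫ ω, g ω * x j ω ∂μ = 0)
    {f : Ω → ℝ} (hf : f ∈ Submodule.span ℝ (x '' S)) : ∫ ω, g ω * f ω ∂μ = 0 := by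
  induction hf using Submodule.span_induction with
  | mem f hf => obtain ⟨j, hj, rfl⟩ := hf; exact h j hj
  | zero => simp
  | add f1 f2 hf1 hf2 ih1 ih2 =>
    have i1 := myIntMul hg (mySpanL2 hx hf1)
    have i2 := myIntMul hg (mySpanL2 hx hf2)
    have heq : ∫ ω, g ω * (f1 + f2) ω ∂μ
        = (∫ ω, g ω * f1 ω ∂μ) + ∫ ω, g ω * f2 ω ∂μ := by
      simp_rw [Pi.add_apply, mul_add]
      exact integral_add i1 i2
    rw [heq, ih1, ih2, add_zero]
  | smul c f hf ih =>
    have heq : ∫ ω, g ω * (c • f) ω ∂μ = c * ∫ ω, g ω * f ω ∂μ := by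
      simp_rw [Pi.smul_apply, smul_eq_mul, mul_left_comm]
      exact integral_const_mul c _
    rw [heq, ih, mul_zero]

end Aux

/-- If `y = Σ_j β_j x_j + ε` with `ε` uncorrelated with all `x_j`, and
`yJ` is the L² projection of the signal `s = Σ_j β_j x_j` onto span{x_j : j ∈ J},
then `E[(s − yJ)²] ≤ (max_j |μ_{J,j}|) · Σ_j |β_j| · max_j √E[(x_{j;J}^⊥)²]`, where
`μ_{J,j}` is the normalized unique contribution (set to `0` for `j ∈ J`). In
particular, if `E(x_j²) = 1` for all `j`, then `E[(s − yJ)²] ≤ (max_j |μ_{J,j}|) Σ_j |β_j|`. -/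
theorem residual_variance_le_max_unique_contribution
    {Ω : Type*} [MeasurableSpace Ω] {μ : Measure Ω} [IsProbabilityMeasure μ]
    {p : ℕ} (hne : (Finset.univ : Finset (Fin p)).Nonempty)
    (x : Fin p → Ω → ℝ) (β : Fin p → ℝ) (ε y s : Ω → ℝ)
    (hxL2 : ∀ j, MemLp (x j) 2 μ) (hyL2 : MemLp y 2 μ)
    (hxmean : ∀ j, ∫ ω, x j ω ∂μ = 0) (hymean : ∫ ω, y ω ∂μ = 0)
    (hs : s = fun ω => ∑ j, β j * x j ω)
    (hy : y = fun ω => s ω + ε ω)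
    (hεuncorr : ∀ j, ∫ ω, ε ω * x j ω ∂μ = 0)
    (J : Finset (Fin p))
    (yJ : Ω → ℝ)
    (hyJmem : yJ ∈ Submodule.span ℝ (x '' (J : Set (Fin p))))
    (hyJorth : ∀ j ∈ J, ∫ ω, (s ω - yJ ω) * x j ω ∂μ = 0)
    (xproj : Fin p → Ω → ℝ)
    (hxpmem : ∀ j, xproj j ∈ Submodule.span ℝ (x '' (J : Set (Fin p))))
    (hxporth : ∀ j, ∀ j' ∈ J, ∫ ω, (x j ω - xproj j ω) * x j' ω ∂μ = 0)
    (μc : Fin p → ℝ)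
    (hμc : ∀ j, μc j = if j ∈ J then 0 else
      (∫ ω, (s ω - yJ ω) * (x j ω - xproj j ω) ∂μ)
        / Real.sqrt (∫ ω, (x j ω - xproj j ω) ^ 2 ∂μ)) :
    (∫ ω, (s ω - yJ ω) ^ 2 ∂μ
      ≤ (Finset.univ.sup' hne fun j => |μc j|) * (∑ j, |β j|)
          * (Finset.univ.sup' hne fun j => Real.sqrt (∫ ω, (x j ω - xproj j ω) ^ 2 ∂μ))) ∧
    ((∀ j, ∫ ω, (x j ω) ^ 2 ∂μ = 1) →
      ∫ ω, (s ω - yJ ω) ^ 2 ∂μ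
        ≤ (Finset.univ.sup' hne fun j => |μc j|) * ∑ j, |β j|) := by
  -- abbreviations
  set M : ℝ := Finset.univ.sup' hne fun j => |μc j| with hM
  set r : Fin p → ℝ := fun j => Real.sqrt (∫ ω, (x j ω - xproj j ω) ^ 2 ∂μ) with hr
  set R : ℝ := Finset.univ.sup' hne r with hRdef
  -- L² facts
  have hsL2 : MemLp s 2 μ := by
    rw [hs]; exact memLp_finset_sum _ (fun j _ => (hxL2 j).const_mul (β j))
  have hyJL2 : MemLp yJ 2 μ := mySpanL2 hxL2 hyJmem
  have hgL2 : MemLp (fun ω => s ω - yJ ω) 2 μ := hsL2.sub hyJL2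
  have hxpL2 : ∀ j, MemLp (xproj j) 2 μ := fun j => mySpanL2 hxL2 (hxpmem j)
  have hdL2 : ∀ j, MemLp (fun ω => x j ω - xproj j ω) 2 μ := fun j => (hxL2 j).sub (hxpL2 j)
  have hq0 : ∀ j, 0 ≤ ∫ ω, (x j ω - xproj j ω) ^ 2 ∂μ :=
    fun j => integral_nonneg (fun ω => sq_nonneg _)
  have hr0 : ∀ j, 0 ≤ r j := fun j => Real.sqrt_nonneg _
  have hM0 : 0 ≤ M := by
    obtain ⟨j0, hj0⟩ := hne
    rw [hM]
    exact le_trans (abs_nonneg (μc j0)) (Finset.le_sup' (fun j => |μc j|) hj0)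
  -- orthogonality of residual to span
  have horth : ∀ f ∈ Submodule.span ℝ (x '' (J : Set (Fin p))),
      ∫ ω, (s ω - yJ ω) * f ω ∂μ = 0 := by
    intro f hf
    exact myOrthSpan hxL2 hgL2 (fun j hj => hyJorth j (by simpa using hj)) hf
  -- key identity
  have expand : ∀ (a : ℝ) (ω : Ω), a * s ω = ∑ j, β j * (a * x j ω) := by
    intro a ω; rw [hs]; simp only
    rw [Finset.mul_sum]; exact Finset.sum_congr rfl fun j _ => by ring
  have key : ∫ ω, (s ω - yJ ω) ^ 2 ∂μ
      = ∑ j, β j * ∫ ω, (s ω - yJ ω) * x j ω ∂μ := by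
    have h1 : ∫ ω, (s ω - yJ ω) * yJ ω ∂μ = 0 := horth yJ hyJmem
    have h2 : ∫ ω, (s ω - yJ ω) * s ω ∂μ
        = ∑ j, β j * ∫ ω, (s ω - yJ ω) * x j ω ∂μ := by
      calc ∫ ω, (s ω - yJ ω) * s ω ∂μ
          = ∫ ω, ∑ j, β j * ((s ω - yJ ω) * x j ω) ∂μ := by
            simp_rw [expand]
        _ = ∑ j, ∫ ω, β j * ((s ω - yJ ω) * x j ω) ∂μ :=
            integral_finset_sum _ (fun j _ => (myIntMul hgL2 (hxL2 j)).const_mul (β j))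
        _ = ∑ j, β j * ∫ ω, (s ω - yJ ω) * x j ω ∂μ := by simp_rw [integral_const_mul]
    have h3 : ∫ ω, (s ω - yJ ω) ^ 2 ∂μ
        = (∫ ω, (s ω - yJ ω) * s ω ∂μ) - ∫ ω, (s ω - yJ ω) * yJ ω ∂μ := by
      rw [← integral_sub (myIntMul hgL2 hsL2) (myIntMul hgL2 hyJL2)]
      congr 1; funext ω; ring
    rw [h3, h1, h2, sub_zero]
  -- per-term bound
  have hterm : ∀ j, β j * ∫ ω, (s ω - yJ ω) * x j ω ∂μ ≤ |β j| * (M * r j) := by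
    intro j
    have hMr : 0 ≤ M * r j := mul_nonneg hM0 (hr0 j)
    by_cases hj : j ∈ J
    · rw [hyJorth j hj, mul_zero]
      exact mul_nonneg (abs_nonneg _) hMr
    · have horthp : ∫ ω, (s ω - yJ ω) * xproj j ω ∂μ = 0 := horth _ (hxpmem j)
      have hsplit : ∫ ω, (s ω - yJ ω) * x j ω ∂μ
          = ∫ ω, (s ω - yJ ω) * (x j ω - xproj j ω) ∂μ := by
        have : ∫ ω, (s ω - yJ ω) * (x j ω - xproj j ω) ∂μ
            = (∫ ω, (s ω - yJ ω) * x j ω ∂μ) - ∫ ω, (s ω - yJ ω) * xproj j ω ∂μ := by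
          rw [← integral_sub (myIntMul hgL2 (hxL2 j)) (myIntMul hgL2 (hxpL2 j))]
          congr 1; funext ω; ring
        rw [this, horthp, sub_zero]
      by_cases hrz : r j = 0
      · have hq : ∫ ω, (x j ω - xproj j ω) ^ 2 ∂μ = 0 := by
          have := Real.sqrt_eq_zero'.mp hrz
          exact le_antisymm (by linarith [this]) (hq0 j)
        have hzero : (fun ω => x j ω - xproj j ω) =ᵐ[μ] 0 := by
          have hint := (hdL2 j).integrable_sq
          have h20 : ∀ ω, 0 ≤ (x j ω - xproj j ω) ^ 2 := fun ω => sq_nonneg _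
          have h0 := (integral_eq_zero_iff_of_nonneg h20 hint).mp hq
          filter_upwards [h0] with ω hω
          have : (x j ω - xproj j ω) ^ 2 = 0 := hω
          exact (pow_eq_zero_iff (two_ne_zero)).mp this
        have hc : ∫ ω, (s ω - yJ ω) * (x j ω - xproj j ω) ∂μ = 0 := by
          have hae : (fun ω => (s ω - yJ ω) * (x j ω - xproj j ω)) =ᵐ[μ] 0 := by
            filter_upwards [hzero] with ω hω
            have : x j ω - xproj j ω = 0 := hω
            simp [this]
          rw [integral_congr_ae hae]; simp
        rw [hsplit, hc, mul_zero]
        exact mul_nonneg (abs_nonneg _) hMr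
      · have hrpos : 0 < r j := lt_of_le_of_ne (hr0 j) (Ne.symm hrz)
        have hμ : μc j = (∫ ω, (s ω - yJ ω) * (x j ω - xproj j ω) ∂μ) / r j := by
          rw [hμc j, if_neg hj]
        have hc : ∫ ω, (s ω - yJ ω) * (x j ω - xproj j ω) ∂μ = μc j * r j := by
          rw [hμ]; field_simp
        rw [hsplit, hc]
        calc β j * (μc j * r j) ≤ |β j * (μc j * r j)| := le_abs_self _
          _ = |β j| * (|μc j| * r j) := by
              rw [abs_mul, abs_mul, abs_of_nonneg (hr0 j)]
          _ ≤ |β j| * (M * r j) := by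
              apply mul_le_mul_of_nonneg_left _ (abs_nonneg _)
              refine mul_le_mul_of_nonneg_right ?_ (hr0 j)
              rw [hM]; exact Finset.le_sup' (fun j => |μc j|) (Finset.mem_univ j)
  -- first inequality
  have main1 : ∫ ω, (s ω - yJ ω) ^ 2 ∂μ ≤ M * (∑ j, |β j|) * R := by
    rw [key]
    calc (∑ j, β j * ∫ ω, (s ω - yJ ω) * x j ω ∂μ)
        ≤ ∑ j, |β j| * (M * r j) := Finset.sum_le_sum (fun j _ => hterm j)
      _ ≤ ∑ j, |β j| * (M * R) := by
          apply Finset.sum_le_sum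
          intro j _
          apply mul_le_mul_of_nonneg_left _ (abs_nonneg _)
          refine mul_le_mul_of_nonneg_left ?_ hM0
          rw [hRdef]; exact Finset.le_sup' r (Finset.mem_univ j)
      _ = M * (∑ j, |β j|) * R := by rw [← Finset.sum_mul]; ring
  refine ⟨main1, ?_⟩
  -- second inequality
  intro hunit
  have hrle1 : ∀ j, r j ≤ 1 := by
    intro j
    have horthxp : ∫ ω, (x j ω - xproj j ω) * xproj j ω ∂μ = 0 :=
      myOrthSpan hxL2 (hdL2 j) (fun j' hj' => hxporth j j' (by simpa using hj')) (hxpmem j)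
    have hdecomp : ∫ ω, (x j ω) ^ 2 ∂μ
        = (∫ ω, (x j ω - xproj j ω) ^ 2 ∂μ)
          + (2 * ∫ ω, (x j ω - xproj j ω) * xproj j ω ∂μ)
          + ∫ ω, (xproj j ω) ^ 2 ∂μ := by
      have i1 := (hdL2 j).integrable_sq
      have i2 := (myIntMul (hdL2 j) (hxpL2 j)).const_mul 2
      have i3 := (hxpL2 j).integrable_sq
      have e1 : ∫ ω, (x j ω) ^ 2 ∂μ
          = ∫ ω, ((x j ω - xproj j ω) ^ 2
            + (2 * ((x j ω - xproj j ω) * xproj j ω) + (xproj j ω) ^ 2)) ∂μ := by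
        congr 1; funext ω; ring
      have h23 : ∫ ω, (2 * ((x j ω - xproj j ω) * xproj j ω) + xproj j ω ^ 2) ∂μ
          = (∫ ω, 2 * ((x j ω - xproj j ω) * xproj j ω) ∂μ) + ∫ ω, xproj j ω ^ 2 ∂μ :=
        integral_add i2 i3
      have hall : ∫ ω, ((x j ω - xproj j ω) ^ 2
            + (2 * ((x j ω - xproj j ω) * xproj j ω) + xproj j ω ^ 2)) ∂μ
          = (∫ ω, (x j ω - xproj j ω) ^ 2 ∂μ)
            + ∫ ω, (2 * ((x j ω - xproj j ω) * xproj j ω) + xproj j ω ^ 2) ∂μ :=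
        integral_add i1 (i2.add i3)
      rw [e1, hall, h23, integral_const_mul]; ring
    have hqle : ∫ ω, (x j ω - xproj j ω) ^ 2 ∂μ ≤ 1 := by
      have hxp2 : 0 ≤ ∫ ω, (xproj j ω) ^ 2 ∂μ := integral_nonneg (fun ω => sq_nonneg _)
      have := hunit j
      rw [hdecomp, horthxp] at this
      linarith
    calc r j = Real.sqrt (∫ ω, (x j ω - xproj j ω) ^ 2 ∂μ) := rfl
      _ ≤ Real.sqrt 1 := Real.sqrt_le_sqrt hqle
      _ = 1 := Real.sqrt_one
  have hR1 : R ≤ 1 := Finset.sup'_le _ _ fun j _ => hrle1 j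
  have hMs : 0 ≤ M * (∑ j, |β j|) :=
    mul_nonneg hM0 (Finset.sum_nonneg fun j _ => abs_nonneg _)
  calc ∫ ω, (s ω - yJ ω) ^ 2 ∂μ ≤ M * (∑ j, |β j|) * R := main1
    _ ≤ M * (∑ j, |β j|) * 1 := mul_le_mul_of_nonneg_left hR1 hMs
    _ = M * ∑ j, |β j| := mul_one _
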